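/- Let (X,μ) be a measure space with 0 < μ(X) < ∞, let p > 2, and let f : X → [0,∞) be measurable with 0 < ‖f‖_{L¹(μ)} < ∞ and ‖f‖_{L^{p/2}(μ)} < ∞. Then μ({x ∈ X : f(x) > ‖f‖_{L¹}/(4 μ(X))}) ≥ (1/2) (p/8)^{2/(p−2)} (‖f‖_{L¹}/‖f‖_{L^{p/2}})^{p/(p−2)}. -/

import Mathlib

open MeasureTheory
lemma log_32 : (2:ℝ)/5 ≤ Real.log (3/2) := by
  rw [Real.le_log_iff_exp_le (by norm_num)]
  have h5 : Real.exp (2/5) ^ 5 = Real.exp 2 := by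
    rw [← Real.exp_nat_mul]; norm_num
  have e1 : Real.exp 1 < 2.7182818286 := Real.exp_one_lt_d9
  have h2 : Real.exp 2 = Real.exp 1 ^ 2 := by
    rw [← Real.exp_nat_mul]; norm_num
  have : Real.exp (2/5) ^ 5 ≤ (3/2:ℝ)^5 := by
    rw [h5, h2]; nlinarith [Real.exp_pos 1]
  exact le_of_pow_le_pow_left₀ (by norm_num) (by norm_num) this
lemma const_ineq (p : ℝ) (hp : 2 < p) :
    (1/2 : ℝ) * (p/8) ^ (2/(p-2)) ≤ (3/4 : ℝ) ^ (p/(p-2)) := by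
  have hp2 : (0:ℝ) < p - 2 := by linarith
  have hp0 : (0:ℝ) < p := by linarith
  set L := Real.log (3/2) with hL
  have hLb := log_32
  have hexp : (3/2:ℝ) ^ (p - 2) = Real.exp ((p-2) * L) := by
    rw [Real.rpow_def_of_pos (by norm_num), mul_comm]
  have hsq : Real.exp ((p-2)*L) = Real.exp ((p-2)*L/2) ^ 2 := by
    rw [← Real.exp_nat_mul]; ring_nf
  have hlow : 1 + (p-2)*L/2 ≤ Real.exp ((p-2)*L/2) := by
    have := Real.add_one_le_exp ((p-2)*L/2); linarith
  have key : (p/6)^2 ≤ (3/2:ℝ) ^ (p-2) := by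
    rw [hexp, hsq]
    have h1 : p/6 ≤ 1 + (p-2)*L/2 := by nlinarith
    nlinarith
  set b := (3/2:ℝ) ^ ((p-2)/2) with hb
  have hbnn : 0 ≤ b := Real.rpow_nonneg (by norm_num) _
  have hb2 : b ^ 2 = (3/2:ℝ) ^ (p-2) := by
    rw [hb, ← Real.rpow_natCast ((3/2:ℝ) ^ ((p-2)/2)) 2, ← Real.rpow_mul (by norm_num)]
    norm_num
  have hpb : p/6 ≤ b := by
    have key2 : (p/6)^2 ≤ b^2 := by rw [hb2]; exact key
    exact le_of_pow_le_pow_left₀ (by norm_num) hbnn key2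
  have hq : (0:ℝ) < 2/(p-2) := by positivity
  have h6 : (p/6 : ℝ) ^ (2/(p-2)) ≤ 3/2 := by
    calc (p/6:ℝ) ^ (2/(p-2)) ≤ b ^ (2/(p-2)) :=
          Real.rpow_le_rpow (by positivity) hpb hq.le
      _ = (3/2:ℝ) ^ ((p-2)/2 * (2/(p-2))) := by rw [hb, ← Real.rpow_mul (by norm_num)]
      _ = 3/2 := by rw [show (p-2)/2 * (2/(p-2)) = 1 by field_simp]; exact Real.rpow_one _
  have h8 : (p/8:ℝ) ^ (2/(p-2)) = (p/6:ℝ)^(2/(p-2)) * (3/4:ℝ)^(2/(p-2)) := by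
    rw [← Real.mul_rpow (by positivity) (by norm_num)]
    congr 1
    ring
  have hsplitexp : (3/4:ℝ) ^ (p/(p-2)) = (3/4:ℝ) * (3/4:ℝ)^(2/(p-2)) := by
    rw [show p/(p-2) = 1 + 2/(p-2) by field_simp; ring, Real.rpow_add (by norm_num),
      Real.rpow_one]
  rw [h8, hsplitexp]
  have h34 : (0:ℝ) ≤ (3/4:ℝ)^(2/(p-2)) := Real.rpow_nonneg (by norm_num) _
  nlinarith

/-- Quantitative non-concentration bound via the layer-cake formula. -/
theorem stmt_2 {X : Type*} [MeasurableSpace X] (μ : Measure X)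
    (hμ0 : 0 < μ Set.univ) (hμfin : μ Set.univ < ⊤)
    (p : ℝ) (hp : 2 < p)
    (f : X → ℝ) (hfmeas : Measurable f) (hfnonneg : ∀ x, 0 ≤ f x)
    (hL1 : Integrable f μ) (hL1pos : 0 < ∫ x, f x ∂μ)
    (hLp : Integrable (fun x => f x ^ (p / 2)) μ) :
    ENNReal.ofReal ((1 / 2) * (p / 8) ^ (2 / (p - 2)) *
        ((∫ x, f x ∂μ) / (∫ x, f x ^ (p / 2) ∂μ) ^ (2 / p)) ^ (p / (p - 2)))
      ≤ μ {x | (∫ x, f x ∂μ) / (4 * (μ Set.univ).toReal) < f x} := by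
  have hp0 : (0:ℝ) < p := by linarith
  have hp2 : (0:ℝ) < p - 2 := by linarith
  have hmX : 0 < (μ Set.univ).toReal := ENNReal.toReal_pos hμ0.ne' hμfin.ne
  set I := ∫ x, f x ∂μ with hIdef
  set K := ∫ x, f x ^ (p / 2) ∂μ with hKdef
  set t := I / (4 * (μ Set.univ).toReal) with htdef
  have ht0 : 0 < t := by positivity
  set A := {x | t < f x} with hAdef
  have hA : MeasurableSet A := measurableSet_lt measurable_const hfmeas
  have hμAfin : μ A ≠ ⊤ := (lt_of_le_of_lt (measure_mono (Set.subset_univ A)) hμfin).ne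
  set m := (μ A).toReal with hmdef
  have hm0 : (0:ℝ) ≤ m := ENNReal.toReal_nonneg
  -- K positive
  have hK0 : 0 ≤ K := integral_nonneg fun x => Real.rpow_nonneg (hfnonneg x) _
  have hKpos : 0 < K := by
    rcases hK0.lt_or_eq with h | h
    · exact h
    · exfalso
      have hz : (fun x => f x ^ (p/2)) =ᵐ[μ] 0 :=
        (integral_eq_zero_iff_of_nonneg (fun x => Real.rpow_nonneg (hfnonneg x) _) hLp).mp h.symm
      have hfz : f =ᵐ[μ] 0 := by
        filter_upwards [hz] with x hx
        have : f x ^ (p/2) = 0 := hx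
        have := (Real.rpow_eq_zero (hfnonneg x) (by positivity)).mp this
        simpa using this
      rw [hIdef, integral_congr_ae hfz] at hL1pos
      simp at hL1pos
  -- Step 1 : most of the mass is above the threshold
  have hcompl : ∫ x in Aᶜ, f x ∂μ ≤ I / 4 := by
    have h1 : ∫ x in Aᶜ, f x ∂μ ≤ ∫ x in Aᶜ, t ∂μ := by
      refine setIntegral_mono_on hL1.integrableOn
        (integrableOn_const (lt_of_le_of_lt (measure_mono (Set.subset_univ _)) hμfin).ne)
        hA.compl (fun x hx => ?_)
      exact le_of_not_gt hx
    rw [setIntegral_const, smul_eq_mul, measureReal_def] at h1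
    have h2 : (μ Aᶜ).toReal ≤ (μ Set.univ).toReal :=
      ENNReal.toReal_mono hμfin.ne (measure_mono (Set.subset_univ _))
    have h3 : (μ Aᶜ).toReal * t ≤ (μ Set.univ).toReal * t :=
      mul_le_mul_of_nonneg_right h2 ht0.le
    have h4 : (μ Set.univ).toReal * t = I / 4 := by
      rw [htdef]; field_simp
    linarith
  have hsplit : (∫ x in A, f x ∂μ) + ∫ x in Aᶜ, f x ∂μ = I := integral_add_compl hA hL1
  have step1 : 3/4 * I ≤ ∫ x in A, f x ∂μ := by linarith
  -- Step 2 : Hölder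
  have hpq : Real.HolderConjugate (p/2) (p/(p-2)) := by
    rw [Real.holderConjugate_iff_eq_conjExponent (by linarith)]
    have h22 : p/2 - 1 = (p-2)/2 := by ring
    rw [h22, div_div_div_cancel_right₀ (by norm_num : (2:ℝ) ≠ 0)]
  have hq0 : ENNReal.ofReal (p/2) ≠ 0 := by
    simp only [ne_eq, ENNReal.ofReal_eq_zero, not_le]; linarith
  have hqt : ENNReal.ofReal (p/2) ≠ ⊤ := ENNReal.ofReal_ne_top
  have hfLp : MemLp f (ENNReal.ofReal (p/2)) μ := by
    have h1 : MemLp (fun x => ‖f x‖ ^ (ENNReal.ofReal (p/2)).toReal)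
        (ENNReal.ofReal (p/2) / ENNReal.ofReal (p/2)) μ := by
      rw [ENNReal.div_self hq0 hqt, memLp_one_iff_integrable]
      have heq : (fun x => ‖f x‖ ^ (ENNReal.ofReal (p/2)).toReal) = fun x => f x ^ (p/2) := by
        funext x
        rw [Real.norm_of_nonneg (hfnonneg x), ENNReal.toReal_ofReal (by linarith)]
      rw [heq]; exact hLp
    exact (memLp_norm_rpow_iff hfmeas.aestronglyMeasurable hq0 hqt).mp h1
  set g : X → ℝ := A.indicator (fun _ => (1:ℝ)) with hgdef
  have hgnn : ∀ x, 0 ≤ g x := fun x => Set.indicator_nonneg (fun _ _ => zero_le_one) x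
  have hgLq : MemLp g (ENNReal.ofReal (p/(p-2))) μ :=
    memLp_indicator_const _ hA 1 (Or.inr hμAfin)
  have holder := integral_mul_le_Lp_mul_Lq_of_nonneg hpq
    (Filter.Eventually.of_forall hfnonneg) (Filter.Eventually.of_forall hgnn) hfLp hgLq
  have hfg : ∫ a, f a * g a ∂μ = ∫ x in A, f x ∂μ := by
    rw [← integral_indicator hA]
    congr 1; funext a
    by_cases ha : a ∈ A <;> simp [hgdef, Set.indicator_apply, ha]
  have hgq : ∫ a, g a ^ (p/(p-2)) ∂μ = m := by
    have heq : (fun a => g a ^ (p/(p-2))) = A.indicator (fun _ => (1:ℝ)) := by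
      funext a
      by_cases ha : a ∈ A <;>
        simp [hgdef, Set.indicator_apply, ha, Real.one_rpow, Real.zero_rpow (by positivity : p/(p-2) ≠ 0)]
    rw [heq, integral_indicator hA, setIntegral_const, smul_eq_mul, mul_one, measureReal_def]
  rw [hfg, hgq] at holder
  have hexp1 : 1 / (p/2) = 2/p := by field_simp
  have hexp2 : 1 / (p/(p-2)) = (p-2)/p := by field_simp
  rw [hexp1, hexp2] at holder
  -- combine
  set J := K ^ (2/p) with hJdef
  have hJpos : 0 < J := Real.rpow_pos_of_pos hKpos _
  have step3 : (3/4) * (I / J) ≤ m ^ ((p-2)/p) := by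
    rw [mul_div_assoc', div_le_iff₀ hJpos]
    calc 3/4 * I ≤ ∫ x in A, f x ∂μ := step1
      _ ≤ J * m ^ ((p-2)/p) := holder
      _ = m ^ ((p-2)/p) * J := mul_comm _ _
  have hfinal : (1/2) * (p/8) ^ (2/(p-2)) * (I / J) ^ (p/(p-2)) ≤ m := by
    have hIJnn : (0:ℝ) ≤ I / J := by positivity
    calc (1/2) * (p/8) ^ (2/(p-2)) * (I / J) ^ (p/(p-2))
        ≤ (3/4:ℝ) ^ (p/(p-2)) * (I / J) ^ (p/(p-2)) :=
          mul_le_mul_of_nonneg_right (const_ineq p hp) (Real.rpow_nonneg hIJnn _)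
      _ = ((3/4) * (I / J)) ^ (p/(p-2)) := (Real.mul_rpow (by norm_num) hIJnn).symm
      _ ≤ (m ^ ((p-2)/p)) ^ (p/(p-2)) :=
          Real.rpow_le_rpow (by positivity) step3 (by positivity)
      _ = m := by
          rw [← Real.rpow_mul hm0, show (p-2)/p * (p/(p-2)) = 1 by field_simp, Real.rpow_one]
  rw [ENNReal.ofReal_le_iff_le_toReal hμAfin]
  exact hfinal
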